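/- If n ≠ n′, then for any choices of indices, ∫_{U(d)} U_{i₁j₁} ⋯ U_{iₙjₙ} · conj(U_{i′₁j′₁}) ⋯ conj(U_{i′_{n′}j′_{n′}}) dU = 0. -/
import Mathlib


open MeasureTheory Matrix

theorem integral_unbalanced_moment_eq_zero (d n n' : ℕ) (hnn' : n ≠ n')
    [MeasurableSpace (Matrix.unitaryGroup (Fin d) ℂ)]
    [BorelSpace (Matrix.unitaryGroup (Fin d) ℂ)]
    (μ : Measure (Matrix.unitaryGroup (Fin d) ℂ))
    [μ.IsHaarMeasure] [IsProbabilityMeasure μ]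
    (i j : Fin n → Fin d) (i' j' : Fin n' → Fin d) :
    ∫ U : Matrix.unitaryGroup (Fin d) ℂ,
        (∏ k : Fin n, (U : Matrix (Fin d) (Fin d) ℂ) (i k) (j k)) *
        (∏ k : Fin n', (starRingEnd ℂ) ((U : Matrix (Fin d) (Fin d) ℂ) (i' k) (j' k))) ∂μ
      = 0 := by
  -- trivial case d = 0
  rcases Nat.eq_zero_or_pos d with hd | hd
  · subst hd
    rcases Nat.eq_zero_or_pos n with hn | hn
    · rcases Nat.eq_zero_or_pos n' with hn' | hn'
      · exact absurd (hn.trans hn'.symm) hnn'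
      · exact (i' ⟨0, hn'⟩).elim0
    · exact (i ⟨0, hn⟩).elim0
  -- main case
  set θ : ℝ := Real.pi / (n + n' + 1) with hθdef
  have hθpos : 0 < θ := by
    apply div_pos Real.pi_pos
    positivity
  set u : ℂ := Complex.exp (θ * Complex.I) with hu
  have huconj : (starRingEnd ℂ) u = Complex.exp (-(θ * Complex.I)) := by
    rw [hu, ← Complex.exp_conj]
    congr 1
    rw [_root_.map_mul, Complex.conj_I, Complex.conj_ofReal]
    ring
  have huu : (starRingEnd ℂ) u * u = 1 := by
    rw [huconj, hu, ← Complex.exp_add, neg_add_cancel, Complex.exp_zero]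
  have h1 : star u * u = 1 := by rw [Complex.star_def]; exact huu
  have h2 : u * star u = 1 := by rw [mul_comm]; exact h1
  have hV : (u • (1 : Matrix (Fin d) (Fin d) ℂ)) ∈ Matrix.unitaryGroup (Fin d) ℂ := by
    constructor
    · rw [star_smul, star_one, smul_mul_smul_comm, one_mul, h1, one_smul]
    · rw [star_smul, star_one, smul_mul_smul_comm, one_mul, h2, one_smul]
  set V : Matrix.unitaryGroup (Fin d) ℂ := ⟨u • 1, hV⟩ with hVdef
  set c : ℂ := u ^ n * ((starRingEnd ℂ) u) ^ n' with hc
  set f : Matrix.unitaryGroup (Fin d) ℂ → ℂ := fun U =>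
    (∏ k : Fin n, (U : Matrix (Fin d) (Fin d) ℂ) (i k) (j k)) *
      (∏ k : Fin n', (starRingEnd ℂ) ((U : Matrix (Fin d) (Fin d) ℂ) (i' k) (j' k))) with hf
  have key : ∀ U : Matrix.unitaryGroup (Fin d) ℂ, f (V * U) = c * f U := by
    intro U
    have hentry : ∀ a b, ((V * U : Matrix.unitaryGroup (Fin d) ℂ) :
        Matrix (Fin d) (Fin d) ℂ) a b = u * (U : Matrix (Fin d) (Fin d) ℂ) a b := by
      intro a b
      have : ((V * U : Matrix.unitaryGroup (Fin d) ℂ) : Matrix (Fin d) (Fin d) ℂ) =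
          (u • (1 : Matrix (Fin d) (Fin d) ℂ)) * (U : Matrix (Fin d) (Fin d) ℂ) := rfl
      rw [this, smul_mul_assoc, one_mul, Matrix.smul_apply, smul_eq_mul]
    simp only [hf, hentry, _root_.map_mul, Finset.prod_mul_distrib, Finset.prod_const,
      Finset.card_univ, Fintype.card_fin, hc]
    ring
  have hinv : ∫ U, f (V * U) ∂μ = ∫ U, f U ∂μ :=
    MeasureTheory.integral_mul_left_eq_self f V
  have hci : c * ∫ U, f U ∂μ = ∫ U, f U ∂μ := by
    conv_rhs => rw [← hinv]
    simp only [key]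
    rw [MeasureTheory.integral_const_mul]
  have hcne : c ≠ 1 := by
    intro hc1
    rw [hc, huconj, hu, ← Complex.exp_nat_mul, ← Complex.exp_nat_mul,
      ← Complex.exp_add] at hc1
    obtain ⟨k, hk⟩ := Complex.exp_eq_one_iff.mp hc1
    have hk' : ((n : ℂ) - n') * θ = k * (2 * Real.pi) := by
      have h2 : (((n : ℂ) - n') * θ) * Complex.I = ((k : ℂ) * (2 * Real.pi)) * Complex.I := by
        linear_combination hk
      exact mul_right_cancel₀ Complex.I_ne_zero h2
    have hkr : ((n : ℝ) - n') * θ = k * (2 * Real.pi) := by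
      exact_mod_cast hk'
    have hne : ((n : ℝ) - n') * θ ≠ 0 := by
      apply mul_ne_zero _ (ne_of_gt hθpos)
      intro h
      exact hnn' (by exact_mod_cast sub_eq_zero.mp h)
    have habs : |((n : ℝ) - n') * θ| < 2 * Real.pi := by
      rw [abs_mul, abs_of_pos hθpos, hθdef]
      have h1 : |(n : ℝ) - n'| < n + n' + 1 := by
        rw [abs_sub_lt_iff]
        constructor <;> push_cast <;> nlinarith [Nat.cast_nonneg (α := ℝ) n,
          Nat.cast_nonneg (α := ℝ) n']
      have h2 : (0 : ℝ) < n + n' + 1 := by positivity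
      calc |(n : ℝ) - n'| * (Real.pi / (n + n' + 1))
          < (n + n' + 1) * (Real.pi / (n + n' + 1)) := by
            apply mul_lt_mul_of_pos_right h1 (div_pos Real.pi_pos h2)
        _ = Real.pi := by field_simp
        _ < 2 * Real.pi := by linarith [Real.pi_pos]
    rw [hkr] at hne habs
    have hk0 : k = 0 := by
      by_contra hk0
      have : (1 : ℝ) ≤ |(k : ℝ)| := by
        exact_mod_cast Int.one_le_abs (by exact_mod_cast hk0)
      rw [abs_mul, abs_of_pos (by linarith [Real.pi_pos] : (0:ℝ) < 2 * Real.pi)] at habs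
      nlinarith [Real.pi_pos]
    rw [hk0] at hne
    simp at hne
  have hzero : (c - 1) * ∫ U, f U ∂μ = 0 := by
    rw [sub_mul, one_mul, hci, sub_self]
  have := mul_eq_zero.mp hzero
  rcases this with h | h
  · exact absurd (sub_eq_zero.mp h) hcne
  · exact h
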